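/- arXiv:0809.4386 — 3 statements merged into one kernel-verified Lean document; each statement's English description precedes it below -/
import Mathlib

section
/- Free groups of finite rank are Hopfian: if F is a free group on a finite set A and φ : F → F is a surjective group homomorphism, then φ is an isomorphism. -/
/-- A reduced word has no adjacent cancelling pair. -/
private lemma free_noAdj {A : Type*} [DecidableEq A] {L : List (A × Bool)}
    (hL : FreeGroup.reduce L = L) (k : ℕ) (x : A) (b : Bool) :
    ¬(L[k]? = some (x, b) ∧ L[k+1]? = some (x, !b)) := by
  rintro ⟨h1, h2⟩
  have hk1 : k + 1 < L.length := (List.getElem?_eq_some_iff.mp h2).1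
  have hk : k < L.length := by omega
  have e1 : L[k] = (x, b) := by
    rwa [List.getElem?_eq_getElem hk, Option.some_inj] at h1
  have e2 : L[k+1] = (x, !b) := by
    rwa [List.getElem?_eq_getElem hk1, Option.some_inj] at h2
  have h3 : L.drop k = (x, b) :: (x, !b) :: L.drop (k+2) := by
    rw [List.drop_eq_getElem_cons hk, e1, List.drop_eq_getElem_cons hk1, e2]
  have hdecomp : L = L.take k ++ (x, b) :: (x, !b) :: L.drop (k+2) := by
    rw [← h3, List.take_append_drop]
  exact FreeGroup.reduce.not (hL.trans hdecomp)

/-- Given a word with no adjacent cancelling pair, for each generator `a` there is a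
permutation of positions `0..n` moving `k ↦ k+1` whenever the `k`-th letter is `a`,
and `k+1 ↦ k` whenever the `k`-th letter is `a⁻¹`. -/
private lemma free_exists_perm {A : Type*} [DecidableEq A] (M : List (A × Bool))
    (hM : ∀ (k : ℕ) (x : A) (b : Bool), ¬(M[k]? = some (x, b) ∧ M[k+1]? = some (x, !b)))
    (a : A) :
    ∃ σ : Equiv.Perm (Fin (M.length + 1)),
      (∀ k : ℕ, (h : M[k]? = some (a, true)) →
          σ ⟨k, by have := (List.getElem?_eq_some_iff.mp h).1; omega⟩
            = ⟨k+1, by have := (List.getElem?_eq_some_iff.mp h).1; omega⟩) ∧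
      (∀ k : ℕ, (h : M[k]? = some (a, false)) →
          σ ⟨k+1, by have := (List.getElem?_eq_some_iff.mp h).1; omega⟩
            = ⟨k, by have := (List.getElem?_eq_some_iff.mp h).1; omega⟩) := by
  classical
  set n := M.length with hn
  set p : Fin (n+1) → Prop :=
    fun x => M[(x : ℕ)]? = some (a, true) ∨ (0 < (x : ℕ) ∧ M[(x : ℕ)-1]? = some (a, false))
    with hp
  set q : Fin (n+1) → Prop :=
    fun y => (0 < (y : ℕ) ∧ M[(y : ℕ)-1]? = some (a, true)) ∨ M[(y : ℕ)]? = some (a, false)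
    with hq
  have bound : ∀ {k : ℕ} {c : A × Bool}, M[k]? = some c → k < n :=
    fun h => (List.getElem?_eq_some_iff.mp h).1
  let f : {x : Fin (n+1) // p x} → {y : Fin (n+1) // q y} := fun x =>
    if h : M[(x.1 : ℕ)]? = some (a, true) then
      ⟨⟨(x.1 : ℕ)+1, by have := bound h; omega⟩,
        Or.inl ⟨Nat.succ_pos _, by simpa using h⟩⟩
    else
      have h2 := x.2.resolve_left h
      ⟨⟨(x.1 : ℕ)-1, by have := x.1.isLt; omega⟩, Or.inr (by simpa using h2.2)⟩
  let g : {y : Fin (n+1) // q y} → {x : Fin (n+1) // p x} := fun y =>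
    if h : 0 < (y.1 : ℕ) ∧ M[(y.1 : ℕ)-1]? = some (a, true) then
      ⟨⟨(y.1 : ℕ)-1, by have := y.1.isLt; omega⟩, Or.inl (by simpa using h.2)⟩
    else
      have h2 := y.2.resolve_left h
      ⟨⟨(y.1 : ℕ)+1, by have := bound h2; omega⟩,
        Or.inr ⟨Nat.succ_pos _, by simpa using h2⟩⟩
  have hgf : Function.LeftInverse g f := by
    rintro ⟨x, hx⟩
    by_cases h1 : M[(x : ℕ)]? = some (a, true)
    · simp only [f, g, dif_pos h1]
      have hc : 0 < ((x : ℕ)+1) ∧ M[((x : ℕ)+1)-1]? = some (a, true) :=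
        ⟨Nat.succ_pos _, by simpa using h1⟩
      rw [dif_pos hc]
      exact Subtype.ext (Fin.ext (by simp))
    · simp only [f, g, dif_neg h1]
      have h2 := hx.resolve_left h1
      have hc : ¬(0 < ((x : ℕ)-1) ∧ M[((x : ℕ)-1)-1]? = some (a, true)) := by
        rintro ⟨hpos, hget⟩
        refine hM ((x : ℕ)-2) a true ⟨by rw [show (x : ℕ)-2 = (x : ℕ)-1-1 by omega]; exact hget, ?_⟩
        have : (x : ℕ)-2+1 = (x : ℕ)-1 := by omega
        rw [this]
        simpa using h2.2
      rw [dif_neg hc]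
      exact Subtype.ext (Fin.ext (by simp; omega))
  have hfg : Function.RightInverse g f := by
    rintro ⟨y, hy⟩
    by_cases h1 : 0 < (y : ℕ) ∧ M[(y : ℕ)-1]? = some (a, true)
    · simp only [f, g, dif_pos h1]
      rw [dif_pos (show M[((y : ℕ)-1 : ℕ)]? = some (a, true) by simpa using h1.2)]
      exact Subtype.ext (Fin.ext (by simp; omega))
    · simp only [f, g, dif_neg h1]
      have h2 := hy.resolve_left h1
      have hc : ¬ M[((y : ℕ)+1 : ℕ)]? = some (a, true) := by
        intro hget
        exact hM (y : ℕ) a false ⟨h2, by simpa using hget⟩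
      rw [dif_neg hc]
      exact Subtype.ext (Fin.ext (by simp))
  let e : {x : Fin (n+1) // p x} ≃ {y : Fin (n+1) // q y} := ⟨f, g, hgf, hfg⟩
  refine ⟨e.extendSubtype, ?_, ?_⟩
  · intro k h
    have hk := bound h
    have hpk : p ⟨k, by omega⟩ := Or.inl (by simpa using h)
    rw [Equiv.extendSubtype_apply_of_mem e _ hpk]
    show (f ⟨⟨k, _⟩, hpk⟩ : Fin (n+1)) = _
    simp only [f]
    rw [dif_pos (show M[((⟨k, by omega⟩ : Fin (n+1)) : ℕ)]? = some (a, true) from h)]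
  · intro k h
    have hk := bound h
    have hpk : p ⟨k+1, by omega⟩ := Or.inr ⟨Nat.succ_pos _, by simpa using h⟩
    rw [Equiv.extendSubtype_apply_of_mem e _ hpk]
    show (f ⟨⟨k+1, _⟩, hpk⟩ : Fin (n+1)) = _
    simp only [f]
    have hc : ¬ M[((⟨k+1, by omega⟩ : Fin (n+1)) : ℕ)]? = some (a, true) := by
      intro hget
      exact hM k a false ⟨h, by simpa using hget⟩
    rw [dif_neg hc]
    exact Fin.ext (by simp)

/-- Free groups are residually finite: a nontrivial element survives in some
finite symmetric group. -/
private lemma free_resid {A : Type*} [DecidableEq A] (w : FreeGroup A) (hw : w ≠ 1) :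
    ∃ (n : ℕ) (π : FreeGroup A →* Equiv.Perm (Fin (n + 1))), π w ≠ 1 := by
  classical
  set L := w.toWord with hLdef
  have hred : FreeGroup.reduce L = L := FreeGroup.reduce_toWord w
  set M := L.reverse with hMdef
  have hlen : M.length = L.length := List.length_reverse
  have hMadj : ∀ (k : ℕ) (x : A) (b : Bool),
      ¬(M[k]? = some (x, b) ∧ M[k+1]? = some (x, !b)) := by
    rintro k x b ⟨h1, h2⟩
    have hk1 : k + 1 < M.length := (List.getElem?_eq_some_iff.mp h2).1
    have e1 : L[L.length - 1 - k]? = some (x, b) := by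
      rw [← List.getElem?_reverse (show k < L.length by omega)]; exact h1
    have e2 : L[L.length - 1 - (k+1)]? = some (x, !b) := by
      rw [← List.getElem?_reverse (show k + 1 < L.length by omega)]; exact h2
    have i1 : L.length - 1 - (k+1) = L.length - 2 - k := by omega
    have i2 : L.length - 2 - k + 1 = L.length - 1 - k := by omega
    rw [i1] at e2
    rw [← i2] at e1
    exact free_noAdj hred (L.length - 2 - k) x (!b) ⟨e2, by simpa using e1⟩
  choose σ hσ1 hσ2 using free_exists_perm M hMadj
  set g : A × Bool → Equiv.Perm (Fin (M.length+1)) :=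
    fun c => cond c.2 (σ c.1) (σ c.1)⁻¹ with hg
  have key : ∀ (k : ℕ) (hk : k < M.length),
      g (M[k]'hk) ⟨k, by omega⟩ = ⟨k+1, by omega⟩ := by
    intro k hk
    rcases hMk : M[k]'hk with ⟨a, b⟩
    have hop : M[k]? = some (a, b) := by rw [List.getElem?_eq_getElem hk, hMk]
    cases b
    · show (σ a)⁻¹ _ = _
      have h2 := hσ2 a k hop
      rw [← h2]
      exact Equiv.symm_apply_apply (σ a) _
    · show (σ a) _ = _
      exact hσ1 a k hop
  have fold : ∀ j, (hj : j ≤ M.length) →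
      (((M.take j).map g).reverse).prod ⟨0, Nat.succ_pos M.length⟩ = ⟨j, by omega⟩ := by
    intro j
    induction j with
    | zero => intro _; simp
    | succ j ih =>
      intro hj
      have hjn : j < M.length := hj
      rw [List.take_succ, List.getElem?_eq_getElem hjn]
      simp only [Option.toList_some, List.map_append, List.reverse_append, List.map_cons,
        List.map_nil, List.reverse_cons, List.reverse_nil, List.nil_append,
        List.singleton_append]
      rw [List.prod_cons, Equiv.Perm.mul_apply, ih (le_of_lt hjn)]
      exact key j hjn
  refine ⟨M.length, FreeGroup.lift σ, ?_⟩
  intro hcontra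
  have h := fold M.length le_rfl
  rw [List.take_length, ← List.map_reverse] at h
  have hrev : M.reverse = L := by rw [hMdef, List.reverse_reverse]
  rw [hrev] at h
  have hlift : (FreeGroup.lift σ) w = (L.map g).prod := by
    conv_lhs => rw [← FreeGroup.mk_toWord (x := w)]
    rw [FreeGroup.lift_mk]
  have h0 : (L.map g).prod ⟨0, Nat.succ_pos M.length⟩ = ⟨0, Nat.succ_pos M.length⟩ := by
    rw [← hlift, hcontra]; rfl
  have hML : M.length = 0 := by
    have := (h0.symm.trans h)
    exact (Fin.mk.inj_iff.mp this).symm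
  have hL : L = [] := List.length_eq_zero_iff.mp (by omega)
  exact hw (FreeGroup.toWord_eq_nil_iff.mp hL)

/-- Free groups of finite rank are Hopfian: every surjective endomorphism of a
free group on a finite set is an isomorphism (i.e. bijective). -/
theorem stmt_8 {A : Type*} [Finite A] (φ : FreeGroup A →* FreeGroup A)
    (hφ : Function.Surjective ⇑φ) : Function.Bijective ⇑φ := by
  classical
  refine ⟨?_, hφ⟩
  have hker : ∀ g : FreeGroup A, φ g = 1 → g = 1 := by
    intro g hg
    by_contra hne
    obtain ⟨n, π, hπ⟩ := free_resid g hne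
    haveI : Finite (FreeGroup A →* Equiv.Perm (Fin (n+1))) :=
      Finite.of_equiv _ FreeGroup.lift
    have hinj : Function.Injective
        (fun ψ : FreeGroup A →* Equiv.Perm (Fin (n+1)) => ψ.comp φ) :=
      fun ψ₁ ψ₂ h => (MonoidHom.cancel_right hφ).mp h
    obtain ⟨ψ, hψ⟩ := Finite.injective_iff_surjective.mp hinj π
    have hψ' : ψ.comp φ = π := hψ
    apply hπ
    calc π g = (ψ.comp φ) g := by rw [hψ']
      _ = ψ (φ g) := rfl
      _ = 1 := by rw [hg, map_one]
  intro x y hxy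
  have h1 : φ (x * y⁻¹) = 1 := by
    rw [map_mul, map_inv, hxy, mul_inv_cancel]
  exact mul_inv_eq_one.mp (hker _ h1)
end

section
/- Let F_2 be the free group on {a, b} and let u ∈ F_2 be cyclically reduced with reduced expression u = a^{i₀} b^{ε₁} a^{i₁} ⋯ b^{ε_k} a^{i_k}, k ≥ 1, ε_ℓ ∈ {1, −1}. Then for m ≥ 0, the reduced form of φ_{a,ba}ᵐ(u) is a^{j₀} b^{ε₁} a^{j₁} ⋯ b^{ε_k} a^{j_k} where j_ℓ = i_ℓ + m if (ε_ℓ = ε_{ℓ+1} = 1) or (ℓ = k and ε_k = 1); j_ℓ = i_ℓ − m if (ε_ℓ = ε_{ℓ+1} = −1) or (ℓ = 0 and ε₁ = −1); and j_ℓ = i_ℓ otherwise. -/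
/-- The free group on two generators. -/
abbrev F2 := FreeGroup Bool

/-- The generator `a`. -/
def a : F2 := FreeGroup.of false

/-- The generator `b`. -/
def b : F2 := FreeGroup.of true


/-- relation for no cancellation between consecutive letters -/
def NC (p q : Bool × Bool) : Prop := ¬(p.1 = q.1 ∧ p.2 = !q.2)

lemma reduce_eq_self {L : List (Bool × Bool)} (h : L.IsChain NC) :
    FreeGroup.reduce L = L := by
  induction L with
  | nil => rfl
  | cons x L ih =>
    rw [FreeGroup.reduce.cons, ih h.tail]
    cases L with
    | nil => rfl
    | cons y tl =>
      have := (List.isChain_cons_cons.mp h).1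
      simp only [NC] at this
      simp [this]

def aw (n : ℤ) : List (Bool × Bool) := List.replicate n.natAbs (false, decide (0 ≤ n))
def bw (e : ℤ) : List (Bool × Bool) := [(true, decide (e = 1))]

lemma mk_replicate_true (x : Bool) (n : ℕ) :
    FreeGroup.mk (List.replicate n (x, true)) = (FreeGroup.of x) ^ n := by
  rw [← FreeGroup.toWord_of_pow, FreeGroup.mk_toWord]

lemma mk_replicate_false (x : Bool) (n : ℕ) :
    FreeGroup.mk (List.replicate n (x, false)) = (FreeGroup.of x) ^ (-(n : ℤ)) := by
  have h : List.replicate n (x, false) = FreeGroup.invRev (List.replicate n (x, true)) := by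
    simp [FreeGroup.invRev, List.map_replicate]
  rw [h, ← FreeGroup.inv_mk, mk_replicate_true, zpow_neg, zpow_natCast]

lemma mk_aw (n : ℤ) : FreeGroup.mk (aw n) = a ^ n := by
  unfold aw a
  rcases le_or_gt 0 n with h | h
  · rw [decide_eq_true h, mk_replicate_true, ← zpow_natCast]
    congr 1; omega
  · rw [decide_eq_false (by omega), mk_replicate_false]
    congr 1; omega

lemma mk_bw (e : ℤ) (he : e = 1 ∨ e = -1) : FreeGroup.mk (bw e) = b ^ e := by
  rcases he with h | h <;> subst h
  · simp only [bw, decide_eq_true rfl]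
    show FreeGroup.mk (List.replicate 1 (true, true)) = _
    rw [mk_replicate_true]; simp [b]
  · simp only [bw]
    norm_num
    show FreeGroup.mk (List.replicate 1 (true, false)) = _
    rw [mk_replicate_false]; simp [b]

def V (j ε : ℕ → ℤ) : ℕ → List (Bool × Bool)
  | 0 => aw (j 0)
  | t + 1 => V j ε t ++ (bw (ε t) ++ aw (j (t + 1)))

lemma mk_V (j ε : ℕ → ℤ) (k : ℕ) (hε : ∀ t < k, ε t = 1 ∨ ε t = -1) :
    FreeGroup.mk (V j ε k) =
      (((List.range k).map fun t => a ^ j t * b ^ ε t).prod) * a ^ j k := by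
  induction k with
  | zero => simp [V, mk_aw]
  | succ k ih =>
    have hε' : ∀ t < k, ε t = 1 ∨ ε t = -1 := fun t ht => hε t (by omega)
    rw [V, ← FreeGroup.mul_mk, ← FreeGroup.mul_mk, ih hε', mk_bw (ε k) (hε k (by omega)),
      mk_aw, List.range_succ, List.map_append, List.prod_append]
    simp [mul_assoc]

lemma length_V (j ε : ℕ → ℤ) (k : ℕ) :
    (V j ε k).length = (∑ t ∈ Finset.range (k + 1), (j t).natAbs) + k := by
  induction k with
  | zero => simp [V, aw]
  | succ k ih =>
    rw [V, List.length_append, List.length_append, ih, Finset.sum_range_succ (n := k + 1)]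
    simp [aw, bw]; omega

lemma chain_V (j ε : ℕ → ℤ) (k : ℕ) (hε : ∀ t < k, ε t = 1 ∨ ε t = -1)
    (hj : ∀ t, 1 ≤ t → t < k → j t = 0 → ε (t - 1) = ε t) :
    (V j ε k).IsChain NC ∧
      (V j ε k).getLast? = (if j k ≠ 0 then some (false, decide (0 ≤ j k))
        else if k = 0 then none else some (true, decide (ε (k - 1) = 1))) := by
  induction k with
  | zero =>
    constructor
    · exact List.isChain_replicate_of_rel _ (by simp [NC])
    · show (aw (j 0)).getLast? = _
      by_cases h : j 0 = 0
      · simp [aw, h, Int.natAbs_eq_zero.mpr h]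
      · rw [aw, List.getLast?_replicate]
        simp [Int.natAbs_eq_zero, h]
  | succ k ih =>
    have hε' : ∀ t < k, ε t = 1 ∨ ε t = -1 := fun t ht => hε t (by omega)
    have hj' : ∀ t, 1 ≤ t → t < k → j t = 0 → ε (t - 1) = ε t :=
      fun t h1 h2 => hj t h1 (by omega)
    obtain ⟨hc, hl⟩ := ih hε' hj'
    have hbchain : (bw (ε k) ++ aw (j (k + 1))).IsChain NC := by
      rw [List.isChain_append]
      refine ⟨List.isChain_singleton _, List.isChain_replicate_of_rel _ (by simp [NC]), ?_⟩
      intro x hx y hy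
      have : y.1 = false := by
        cases hn : (j (k+1)).natAbs with
        | zero => simp [aw, hn] at hy
        | succ n =>
          simp only [aw, hn, List.replicate_succ, List.head?_cons,
            Option.mem_some_iff] at hy
          rw [← hy]
      simp only [bw, List.getLast?_singleton, Option.mem_some_iff] at hx
      subst hx; simp [NC, this]
    constructor
    · rw [V, List.isChain_append]
      refine ⟨hc, hbchain, ?_⟩
      intro x hx y hy
      have hy' : y = (true, decide (ε k = 1)) := by
        simp only [bw, List.cons_append, List.head?_cons, Option.mem_some_iff] at hy
        exact hy.symm
      subst hy'
      rw [hl] at hx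
      by_cases h0 : j k = 0
      · simp only [h0, ne_eq, not_true_eq_false, if_false] at hx
        rcases Nat.eq_zero_or_pos k with hk0 | hk1
        · simp [hk0] at hx
        · have hk0 : ¬ k = 0 := by omega
          simp only [hk0, if_false, Option.mem_some_iff] at hx
          have heq : ε (k - 1) = ε k := hj k hk1 (by omega) h0
          subst hx
          simp [NC, heq]
      · simp only [h0, ne_eq, not_false_eq_true, if_true, Option.mem_some_iff] at hx
        subst hx; simp [NC]
    · rw [V]
      by_cases h0 : j (k + 1) = 0
      · have ha : aw (j (k+1)) = [] := by simp [aw, Int.natAbs_eq_zero.mpr h0]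
        rw [ha, List.getLast?_append_of_ne_nil _ (by simp [bw])]
        simp [bw, h0]
      · rw [List.getLast?_append_of_ne_nil _ (by simp [aw, bw, Int.natAbs_eq_zero, h0]),
          List.getLast?_append_of_ne_nil _ (by simp [aw, Int.natAbs_eq_zero, h0])]
        rw [aw, List.getLast?_replicate]
        simp [Int.natAbs_eq_zero, h0]

lemma norm_V (j ε : ℕ → ℤ) (k : ℕ) (hε : ∀ t < k, ε t = 1 ∨ ε t = -1)
    (hj : ∀ t, 1 ≤ t → t < k → j t = 0 → ε (t - 1) = ε t) :
    FreeGroup.norm (FreeGroup.mk (V j ε k)) =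
      (∑ t ∈ Finset.range (k + 1), (j t).natAbs) + k := by
  rw [FreeGroup.norm, FreeGroup.toWord_mk, reduce_eq_self (chain_V j ε k hε hj).1, length_V]

lemma telescope {G : Type*} [Group G] (A B C : ℕ → G) (hC0 : C 0 = 1) :
    ∀ (k : ℕ) (D : G),
    (((List.range k).map fun t => A t * B t * C (t + 1)).prod) * D =
    (((List.range k).map fun t => C t * A t * B t).prod) * (C k * D) := by
  intro k
  induction k with
  | zero => intro D; simp [hC0]
  | succ k ih =>
    intro D
    rw [List.range_succ, List.map_append, List.prod_append, List.map_append, List.prod_append]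
    simp only [List.map_cons, List.map_nil, List.prod_cons, List.prod_nil, mul_one]
    have h1 : ((List.range k).map fun t => A t * B t * C (t + 1)).prod *
        (A k * B k * C (k + 1)) * D =
        ((List.range k).map fun t => A t * B t * C (t + 1)).prod *
        (A k * B k * (C (k + 1) * D)) := by group
    rw [h1, ih]
    group

/-- Effect of φ_{a,ba}ᵐ on a cyclically reduced word
u = a^{i₀} b^{ε₁} a^{i₁} ⋯ b^{ε_k} a^{i_k}: the reduced form of φ_{a,ba}ᵐ(u) is
a^{j₀} b^{ε₁} ⋯ b^{ε_k} a^{j_k}, where j_ℓ = i_ℓ + m when ε_ℓ = ε_{ℓ+1} = 1 (or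
ℓ = k, ε_k = 1), j_ℓ = i_ℓ − m when ε_ℓ = ε_{ℓ+1} = −1 (or ℓ = 0, ε₁ = −1), and
j_ℓ = i_ℓ otherwise; equivalently j t = i t + m·[t ≥ 1 ∧ ε (t−1) = 1]
− m·[t < k ∧ ε t = −1] (0-indexed ε).  Reducedness of the resulting expression
is stated via the norm identity. -/
theorem stmt_14 (k : ℕ) (hk : 1 ≤ k) (i : ℕ → ℤ) (ε : ℕ → ℤ)
    (hε : ∀ t < k, ε t = 1 ∨ ε t = -1)
    (u : F2)
    (hu : u = (((List.range k).map fun t => a ^ i t * b ^ ε t).prod) * a ^ i k)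
    (hred : ∀ t, 1 ≤ t → t < k → i t = 0 → ε (t - 1) = ε t)
    (hcyc : FreeGroup.norm (u * u) = 2 * FreeGroup.norm u)
    (Φ : MulAut F2) (hΦa : Φ a = a) (hΦb : Φ b = b * a) (m : ℕ)
    (j : ℕ → ℤ)
    (hj : ∀ t, j t = i t + (if 1 ≤ t ∧ ε (t - 1) = 1 then (m : ℤ) else 0)
        - (if t < k ∧ ε t = -1 then (m : ℤ) else 0)) :
    (Φ ^ m) u = (((List.range k).map fun t => a ^ j t * b ^ ε t).prod) * a ^ j k ∧
    FreeGroup.norm ((Φ ^ m) u) =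
      (∑ t ∈ Finset.range (k + 1), (j t).natAbs) + k := by
  -- action of Φ^m on generators
  have hma' : ∀ n : ℕ, (Φ ^ n) a = a := by
    intro n
    induction n with
    | zero => rfl
    | succ n ih => rw [pow_succ, MulAut.mul_apply, hΦa, ih]
  have hmb' : ∀ n : ℕ, (Φ ^ n) b = b * a ^ (n : ℤ) := by
    intro n
    induction n with
    | zero => simp
    | succ n ih =>
      rw [pow_succ, MulAut.mul_apply, hΦb, map_mul, ih, hma' n, mul_assoc, ← zpow_add_one]
      norm_cast
  have hma : (Φ ^ m) a = a := hma' m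
  have hmb : (Φ ^ m) b = b * a ^ (m : ℤ) := hmb' m
  -- set up the three sequences
  set A : ℕ → F2 := fun t => a ^ (i t - (if t < k ∧ ε t = -1 then (m : ℤ) else 0)) with hA
  set B : ℕ → F2 := fun t => b ^ ε t with hB
  set C : ℕ → F2 := fun t => a ^ (if 1 ≤ t ∧ ε (t - 1) = 1 then (m : ℤ) else 0) with hC
  have hC0 : C 0 = 1 := by simp [hC]
  -- Φ^m of each factor
  have hfac : ∀ t < k, (Φ ^ m) (a ^ i t * b ^ ε t) = A t * B t * C (t + 1) := by
    intro t ht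
    rw [map_mul, map_zpow, map_zpow, hma, hmb]
    rcases hε t ht with h | h <;>
      simp only [hA, hB, hC, h, ht, add_tsub_cancel_right] <;> norm_num <;> group
  have key : (Φ ^ m) u = (((List.range k).map fun t => a ^ j t * b ^ ε t).prod) * a ^ j k := by
    rw [hu, map_mul, map_list_prod, List.map_map]
    have h1 : (List.range k).map ((Φ ^ m) ∘ fun t => a ^ i t * b ^ ε t) =
        (List.range k).map fun t => A t * B t * C (t + 1) :=
      List.map_congr_left fun t ht => hfac t (List.mem_range.mp ht)
    have h2 : ((List.range k).map fun t => C t * A t * B t) =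
        (List.range k).map fun t => a ^ j t * b ^ ε t := by
      refine List.map_congr_left fun t ht => ?_
      have ht' : t < k := List.mem_range.mp ht
      simp only [hA, hB, hC]
      rw [← zpow_add]
      congr 2
      rw [hj t]; ring
    have h3 : C k * a ^ i k = a ^ j k := by
      simp only [hC]
      rw [← zpow_add]
      congr 1
      rw [hj k]
      have : ¬ (k < k ∧ ε k = -1) := by omega
      simp [this]; ring
    rw [h1, map_zpow, hma, telescope A B C hC0 k (a ^ i k), h2, h3]
  refine ⟨key, ?_⟩
  -- reducedness condition for j
  have hjred : ∀ t, 1 ≤ t → t < k → j t = 0 → ε (t - 1) = ε t := by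
    intro t h1 h2 h0
    rcases hε t h2 with ht | ht <;> rcases hε (t - 1) (by omega) with ht' | ht'
    · rw [ht, ht']
    · exact hred t h1 h2 (by rw [hj t] at h0; simp [h1, ht, ht'] at h0; omega)
    · exact hred t h1 h2 (by rw [hj t] at h0; simp [h1, h2, ht, ht'] at h0; omega)
    · rw [ht, ht']
  rw [key, ← mk_V j ε k hε, norm_V j ε k hε hjred]
end

section
/- Let F_2 be the free group on {a, b}, and let u ∈ F_2 be cyclically reduced such that its reduced word either starts with b or ends with b⁻¹. Then for every m ≥ 0, φ_{a,ba}ᵐ(u) is cyclically reduced and its reduced word also either starts with b or ends with b⁻¹. -/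
/-- An element of the free group is cyclically reduced iff |u²| = 2|u|. -/
def CyclicallyReduced (u : F2) : Prop :=
  FreeGroup.norm (u * u) = 2 * FreeGroup.norm u

def fsub : List (Bool × Bool) → List (Bool × Bool)
  | [] => []
  | (false, true) :: (true, false) :: t => (true, false) :: fsub t
  | (true, true) :: (false, false) :: t => (true, true) :: fsub t
  | (false, s) :: t => (false, s) :: fsub t
  | (true, true) :: t => (true, true) :: (false, true) :: fsub t
  | (true, false) :: t => (false, false) :: (true, false) :: fsub t

def gen (x : Bool × Bool) : F2 := cond x.2 (FreeGroup.of x.1) (FreeGroup.of x.1)⁻¹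

lemma mk_cons' (x : Bool × Bool) (l : List (Bool × Bool)) :
    FreeGroup.mk (x :: l) = gen x * FreeGroup.mk l := by
  rcases x with ⟨c, s⟩
  cases s
  · show FreeGroup.mk ([(c, false)] ++ l) = (FreeGroup.of c)⁻¹ * _
    rw [← FreeGroup.mul_mk]
    congr 1
  · show FreeGroup.mk ([(c, true)] ++ l) = FreeGroup.of c * _
    rw [← FreeGroup.mul_mk]
    rfl

theorem mk_fsub (Φ : MulAut F2) (hΦa : Φ a = a) (hΦb : Φ b = b * a) :
    ∀ l : List (Bool × Bool), FreeGroup.mk (fsub l) = Φ (FreeGroup.mk l) := by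
  have h1 : Φ (FreeGroup.of false) = FreeGroup.of false := hΦa
  have h2 : Φ (FreeGroup.of true) = FreeGroup.of true * FreeGroup.of false := hΦb
  intro l
  induction l using fsub.induct with
  | case1 => rw [show fsub [] = [] from rfl, ← FreeGroup.one_eq_mk, map_one]
  | case2 t ih =>
    simp only [fsub, mk_cons', map_mul, ih, gen, cond, map_inv, h1, h2]
    group
  | case3 t ih =>
    simp only [fsub, mk_cons', map_mul, ih, gen, cond, map_inv, h1, h2]
    group
  | case4 s t hne ih =>
    cases s <;>
    · simp only [fsub, mk_cons', map_mul, ih, gen, cond, map_inv, h1, h2]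
  | case5 t hne ih =>
    simp only [fsub, mk_cons', map_mul, ih, gen, cond, map_inv, h1, h2]
    group
  | case6 t ih =>
    simp only [fsub, mk_cons', map_mul, ih, gen, cond, map_inv, h1, h2]
    group

def Rd (x y : Bool × Bool) : Prop := ¬(x.1 = y.1 ∧ x.2 = !y.2)

theorem reduce_eq_self_of_chain {l : List (Bool × Bool)} (h : List.Chain' Rd l) :
    FreeGroup.reduce l = l := by
  induction l with
  | nil => rfl
  | cons x t ih =>
    have ht : FreeGroup.reduce t = t := ih h.tail
    rw [FreeGroup.reduce.cons, ht]
    cases t with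
    | nil => rfl
    | cons y t' =>
      have : Rd x y := List.isChain_cons_cons.1 h |>.1
      simp only [Rd] at this
      simp [this]

theorem chain_of_reduce_eq_self {l : List (Bool × Bool)} (h : FreeGroup.reduce l = l) :
    List.Chain' Rd l := by
  induction l with
  | nil => exact List.IsChain.nil
  | cons x t ih =>
    rw [FreeGroup.reduce.cons] at h
    rcases ht : FreeGroup.reduce t with _ | ⟨y, t2⟩
    · rw [ht] at h
      injection h with h1 h2
      subst h2; exact List.IsChain.singleton _
    · rw [ht] at h
      by_cases hc : x.1 = y.1 ∧ x.2 = !y.2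
      · simp only [hc, if_true, and_self] at h
        exfalso
        have hl := (FreeGroup.reduce.red (L := t)).length_le
        rw [ht] at hl
        have h2 := congrArg List.length h
        simp at h2 hl; omega
      · simp only [if_neg hc] at h
        have h2 : t = y :: t2 := by
          injection h with _ h2; exact h2.symm
        rw [h2] at ih ⊢
        refine List.isChain_cons_cons.2 ⟨hc, ih ?_⟩
        rw [← h2, ht, h2]

lemma fsub_head : ∀ (x : Bool × Bool) (t : List (Bool × Bool)), ∃ z t',
    fsub (x :: t) = z :: t' ∧
    (z = x ∨ (x = (false,true) ∧ z = (true,false)) ∨ (x = (true,false) ∧ z = (false,false))) ∧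
    (x = (true,false) → z = (false,false)) := by
  rintro ⟨c, s⟩ t
  cases c <;> cases s
  · exact ⟨(false,false), fsub t, by simp [fsub], by simp, by simp⟩
  · rcases t with _ | ⟨⟨c2,s2⟩, t'⟩
    · exact ⟨(false,true), [], by simp [fsub], by simp, by simp⟩
    · cases c2 <;> cases s2
      · exact ⟨(false,true), (false, false) :: fsub t', by simp [fsub], by simp, by simp⟩
      · exact ⟨(false,true), fsub ((false, true) :: t'), by simp [fsub], by simp, by simp⟩
      · exact ⟨(true,false), fsub t', by simp [fsub], by simp, by simp⟩
      · exact ⟨(false,true), fsub ((true, true) :: t'), by simp [fsub], by simp, by simp⟩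
  · exact ⟨(false,false), (true, false) :: fsub t, by simp [fsub], by simp, by simp⟩
  · rcases t with _ | ⟨⟨c2,s2⟩, t'⟩
    · exact ⟨(true,true), [(false, true)], by simp [fsub], by simp, by simp⟩
    · cases c2 <;> cases s2
      · exact ⟨(true,true), fsub t', by simp [fsub], by simp, by simp⟩
      · exact ⟨(true,true), (false, true) :: fsub ((false, true) :: t'), by simp [fsub], by simp, by simp⟩
      · exact ⟨(true,true), (false, true) :: (false, false) :: (true, false) :: fsub t', by simp [fsub], by simp, by simp⟩
      · exact ⟨(true,true), (false, true) :: fsub ((true, true) :: t'), by simp [fsub], by simp, by simp⟩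

lemma fsub_ne_nil {l : List (Bool × Bool)} (h : l ≠ []) : fsub l ≠ [] := by
  rcases l with _ | ⟨x, t⟩
  · exact absurd rfl h
  · obtain ⟨z, t', hz, -, -⟩ := fsub_head x t
    simp [hz]
-- helper: append a letter in front of fsub t, given Chain' t and a condition on allowed heads
lemma chain_cons_fsub (w : Bool × Bool) (t : List (Bool × Bool))
    (hch : (fsub t).Chain' Rd)
    (hcond : ∀ x t'', t = x :: t'' → ∀ z,
      (z = x ∨ (x = (false,true) ∧ z = (true,false)) ∨ (x = (true,false) ∧ z = (false,false))) →
      (x = (true,false) → z = (false,false)) → Rd w z) :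
    (w :: fsub t).Chain' Rd := by
  rcases t with _ | ⟨x, t''⟩
  · exact List.IsChain.singleton _
  · obtain ⟨z, t', hz, hzor, hzB'⟩ := fsub_head x t''
    rw [hz]
    rw [hz] at hch
    exact List.isChain_cons_cons.2 ⟨hcond x t'' rfl z hzor hzB', hch⟩

theorem fsub_chain : ∀ l : List (Bool × Bool), l.Chain' Rd → (fsub l).Chain' Rd := by
  intro l
  induction l using fsub.induct with
  | case1 => intro _; exact List.IsChain.nil
  | case2 t ih =>
    intro hl
    rw [show fsub ((false,true)::(true,false)::t) = (true,false) :: fsub t by simp [fsub]]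
    refine chain_cons_fsub _ _ (ih hl.tail.tail) ?_
    rintro x t'' rfl z hzor hzB'
    have hx : Rd (true,false) x := (List.isChain_cons_cons.1 (List.isChain_cons_cons.1 hl).2).1
    rcases x with ⟨xc, xs⟩; rcases z with ⟨zc, zs⟩
    simp [Rd] at hx ⊢
    cases xc <;> cases xs <;> cases zc <;> cases zs <;> simp_all
  | case3 t ih =>
    intro hl
    rw [show fsub ((true,true)::(false,false)::t) = (true,true) :: fsub t by simp [fsub]]
    refine chain_cons_fsub _ _ (ih hl.tail.tail) ?_
    rintro x t'' rfl z hzor hzB'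
    have hx : Rd (false,false) x := (List.isChain_cons_cons.1 (List.isChain_cons_cons.1 hl).2).1
    rcases x with ⟨xc, xs⟩; rcases z with ⟨zc, zs⟩
    simp [Rd] at hx ⊢
    cases xc <;> cases xs <;> cases zc <;> cases zs <;> simp_all
  | case4 s t hne ih =>
    intro hl
    rw [show fsub ((false,s)::t) = (false,s) :: fsub t by
      cases s
      · simp [fsub]
      · rcases t with _ | ⟨⟨xc,xs⟩,t''⟩
        · simp [fsub]
        · cases xc <;> cases xs
          · simp [fsub]
          · simp [fsub]
          · exact (hne t'' rfl rfl).elim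
          · simp [fsub]]
    refine chain_cons_fsub _ _ (ih hl.tail) ?_
    rintro x t'' rfl z hzor hzB'
    have hx : Rd (false,s) x := (List.isChain_cons_cons.1 hl).1
    have hne' : ¬(s = true ∧ x = (true,false)) := by
      rintro ⟨rfl, rfl⟩; exact hne _ rfl rfl
    rcases x with ⟨xc, xs⟩; rcases z with ⟨zc, zs⟩
    simp [Rd] at hx ⊢
    cases s <;> cases xc <;> cases xs <;> cases zc <;> cases zs <;> simp_all
  | case5 t hne ih =>
    intro hl
    rw [show fsub ((true,true)::t) = (true,true) :: (false,true) :: fsub t by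
      rcases t with _ | ⟨⟨xc,xs⟩,t''⟩
      · simp [fsub]
      · cases xc <;> cases xs
        · exact (hne t'' rfl).elim
        · simp [fsub]
        · simp [fsub]
        · simp [fsub]]
    refine List.isChain_cons_cons.2 ⟨by simp [Rd], ?_⟩
    refine chain_cons_fsub _ _ (ih hl.tail) ?_
    rintro x t'' rfl z hzor hzB'
    have hx : Rd (true,true) x := (List.isChain_cons_cons.1 hl).1
    have hne' : x ≠ (false,false) := by
      rintro rfl; exact hne _ rfl
    rcases x with ⟨xc, xs⟩; rcases z with ⟨zc, zs⟩
    simp [Rd] at hx ⊢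
    cases xc <;> cases xs <;> cases zc <;> cases zs <;> simp_all
  | case6 t ih =>
    intro hl
    rw [show fsub ((true,false)::t) = (false,false) :: (true,false) :: fsub t by simp [fsub]]
    refine List.isChain_cons_cons.2 ⟨by simp [Rd], ?_⟩
    refine chain_cons_fsub _ _ (ih hl.tail) ?_
    rintro x t'' rfl z hzor hzB'
    have hx : Rd (true,false) x := (List.isChain_cons_cons.1 hl).1
    rcases x with ⟨xc, xs⟩; rcases z with ⟨zc, zs⟩
    simp [Rd] at hx ⊢
    cases xc <;> cases xs <;> cases zc <;> cases zs <;> simp_all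
lemma getLast?_cons_of_ne_nil {x : Bool × Bool} {t : List (Bool × Bool)} (h : t ≠ []) :
    (x :: t).getLast? = t.getLast? := by
  rcases t with _ | ⟨y, t'⟩
  · exact absurd rfl h
  · exact List.getLast?_cons_cons

lemma fsub_last : ∀ l : List (Bool × Bool), l.getLast? = some (true, false) →
    (fsub l).getLast? = some (true, false) := by
  intro l
  induction l using fsub.induct with
  | case1 => simp
  | case2 t ih =>
    intro h
    rw [show fsub ((false,true)::(true,false)::t) = (true,false) :: fsub t by simp [fsub]]
    rcases eq_or_ne t [] with rfl | hne
    · simp [fsub]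
    · rw [getLast?_cons_of_ne_nil (fsub_ne_nil hne)]
      rw [List.getLast?_cons_cons, getLast?_cons_of_ne_nil hne] at h
      exact ih h
  | case3 t ih =>
    intro h
    rw [show fsub ((true,true)::(false,false)::t) = (true,true) :: fsub t by simp [fsub]]
    rcases eq_or_ne t [] with rfl | hne
    · simp at h
    · rw [getLast?_cons_of_ne_nil (fsub_ne_nil hne)]
      rw [List.getLast?_cons_cons, getLast?_cons_of_ne_nil hne] at h
      exact ih h
  | case4 s t hne4 ih =>
    intro h
    rw [show fsub ((false,s)::t) = (false,s) :: fsub t by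
      cases s
      · simp [fsub]
      · rcases t with _ | ⟨⟨xc,xs⟩,t''⟩
        · simp [fsub]
        · cases xc <;> cases xs
          · simp [fsub]
          · simp [fsub]
          · exact (hne4 t'' rfl rfl).elim
          · simp [fsub]]
    rcases eq_or_ne t [] with rfl | hne
    · simp at h
    · rw [getLast?_cons_of_ne_nil (fsub_ne_nil hne)]
      rw [getLast?_cons_of_ne_nil hne] at h
      exact ih h
  | case5 t hne5 ih =>
    intro h
    rw [show fsub ((true,true)::t) = (true,true) :: (false,true) :: fsub t by
      rcases t with _ | ⟨⟨xc,xs⟩,t''⟩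
      · simp [fsub]
      · cases xc <;> cases xs
        · exact (hne5 t'' rfl).elim
        · simp [fsub]
        · simp [fsub]
        · simp [fsub]]
    rcases eq_or_ne t [] with rfl | hne
    · simp at h
    · rw [List.getLast?_cons_cons, getLast?_cons_of_ne_nil (fsub_ne_nil hne)]
      rw [getLast?_cons_of_ne_nil hne] at h
      exact ih h
  | case6 t ih =>
    intro h
    rw [show fsub ((true,false)::t) = (false,false) :: (true,false) :: fsub t by simp [fsub]]
    rcases eq_or_ne t [] with rfl | hne
    · simp [fsub]
    · rw [List.getLast?_cons_cons, getLast?_cons_of_ne_nil (fsub_ne_nil hne)]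
      rw [getLast?_cons_of_ne_nil hne] at h
      exact ih h

lemma Hprop {x : Bool × Bool} {t l2 : List (Bool × Bool)} (h : t ≠ [])
    (H : l2.head? = some (true,true) ∨ (x::t).getLast? = some (true,false)) :
    l2.head? = some (true,true) ∨ t.getLast? = some (true,false) := by
  rcases H with H | H
  · exact Or.inl H
  · right; rwa [getLast?_cons_of_ne_nil h] at H

lemma fsub_append : ∀ l1 l2 : List (Bool × Bool),
    (l2.head? = some (true, true) ∨ l1.getLast? = some (true, false)) →
    fsub (l1 ++ l2) = fsub l1 ++ fsub l2 := by
  intro l1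
  induction l1 using fsub.induct with
  | case1 => intro l2 _; rfl
  | case2 t ih =>
    intro l2 H
    rw [List.cons_append, List.cons_append,
      show ∀ r, fsub ((false,true)::(true,false)::r) = (true,false) :: fsub r from fun r => by simp [fsub]]
    rw [show fsub ((false,true)::(true,false)::t) = (true,false) :: fsub t by simp [fsub], List.cons_append]
    congr 1
    rcases eq_or_ne t [] with rfl | hne
    · rfl
    · exact ih l2 (Hprop hne (Hprop (List.cons_ne_nil _ _) H))
  | case3 t ih =>
    intro l2 H
    rw [List.cons_append, List.cons_append,
      show ∀ r, fsub ((true,true)::(false,false)::r) = (true,true) :: fsub r from fun r => by simp [fsub]]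
    rw [show fsub ((true,true)::(false,false)::t) = (true,true) :: fsub t by simp [fsub], List.cons_append]
    congr 1
    rcases eq_or_ne t [] with rfl | hne
    · rfl
    · exact ih l2 (Hprop hne (Hprop (List.cons_ne_nil _ _) H))
  | case4 s t hne ih =>
    intro l2 H
    rw [show fsub ((false,s)::t) = (false,s) :: fsub t by
      cases s
      · simp [fsub]
      · rcases t with _ | ⟨⟨xc,xs⟩,t''⟩
        · simp [fsub]
        · cases xc <;> cases xs
          · simp [fsub]
          · simp [fsub]
          · exact (hne t'' rfl rfl).elim
          · simp [fsub]]
    rw [List.cons_append, List.cons_append]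
    have key : fsub ((false,s) :: (t ++ l2)) = (false,s) :: fsub (t ++ l2) := by
      cases s
      · simp [fsub]
      · rcases t with _ | ⟨⟨xc,xs⟩,t''⟩
        · -- t = [], head of l2 matters
          rcases H with H | H
          · rcases l2 with _ | ⟨y, l2'⟩
            · simp [fsub]
            · simp at H
              subst H
              simp [fsub]
          · simp at H
        · cases xc <;> cases xs
          · simp [fsub]
          · simp [fsub]
          · exact (hne t'' rfl rfl).elim
          · simp [fsub]
    rw [key]
    congr 1
    rcases eq_or_ne t [] with rfl | hne2
    · rfl
    · exact ih l2 (Hprop hne2 H)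
  | case5 t hne ih =>
    intro l2 H
    rw [show fsub ((true,true)::t) = (true,true) :: (false,true) :: fsub t by
      rcases t with _ | ⟨⟨xc,xs⟩,t''⟩
      · simp [fsub]
      · cases xc <;> cases xs
        · exact (hne t'' rfl).elim
        · simp [fsub]
        · simp [fsub]
        · simp [fsub]]
    rw [List.cons_append]
    have key : fsub ((true,true) :: (t ++ l2)) = (true,true) :: (false,true) :: fsub (t ++ l2) := by
      rcases t with _ | ⟨⟨xc,xs⟩,t''⟩
      · rcases H with H | H
        · rcases l2 with _ | ⟨y, l2'⟩
          · simp [fsub]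
          · simp at H
            subst H
            simp [fsub]
        · simp at H
      · cases xc <;> cases xs
        · exact (hne t'' rfl).elim
        · simp [fsub]
        · simp [fsub]
        · simp [fsub]
    rw [key, List.cons_append, List.cons_append]
    congr 2
    rcases eq_or_ne t [] with rfl | hne2
    · rfl
    · exact ih l2 (Hprop hne2 H)
  | case6 t ih =>
    intro l2 H
    rw [List.cons_append,
      show ∀ r, fsub ((true,false)::r) = (false,false)::(true,false):: fsub r from fun r => by simp [fsub]]
    rw [show fsub ((true,false)::t) = (false,false)::(true,false) :: fsub t by simp [fsub],
      List.cons_append, List.cons_append]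
    congr 2
    rcases eq_or_ne t [] with rfl | hne2
    · rfl
    · exact ih l2 (Hprop hne2 H)

lemma key_step (Φ : MulAut F2) (hΦa : Φ a = a) (hΦb : Φ b = b * a) (u : F2)
    (hcyc : CyclicallyReduced u)
    (hsb : u.toWord.head? = some (true, true) ∨ u.toWord.getLast? = some (true, false)) :
    CyclicallyReduced (Φ u) ∧
    ((Φ u).toWord.head? = some (true, true) ∨ (Φ u).toWord.getLast? = some (true, false)) := by
  set w := u.toWord with hw
  have hch : List.Chain' Rd w := chain_of_reduce_eq_self (FreeGroup.reduce_toWord u)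
  have hmk : FreeGroup.mk (fsub w) = Φ u := by
    rw [mk_fsub Φ hΦa hΦb, hw, FreeGroup.mk_toWord]
  have htoword : (Φ u).toWord = fsub w := by
    rw [← hmk, FreeGroup.toWord_mk, reduce_eq_self_of_chain (fsub_chain w hch)]
  have huu : u * u = FreeGroup.mk (w ++ w) := by
    conv_lhs => rw [← FreeGroup.mk_toWord (x := u)]
    rw [FreeGroup.mul_mk]
  have hnorm2 : (FreeGroup.reduce (w ++ w)).length = (w ++ w).length := by
    have h1 : FreeGroup.norm (u * u) = (FreeGroup.reduce (w ++ w)).length := by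
      rw [huu, FreeGroup.norm, FreeGroup.toWord_mk]
    have h2 : FreeGroup.norm u = w.length := rfl
    have hcyc' : FreeGroup.norm (u * u) = 2 * FreeGroup.norm u := hcyc
    rw [h1, h2] at hcyc'
    simp [hcyc', List.length_append, two_mul]
  have h2 : FreeGroup.reduce (w ++ w) = w ++ w :=
    (FreeGroup.Red.sublist FreeGroup.reduce.red).eq_of_length hnorm2
  have hch2 : List.Chain' Rd (w ++ w) := chain_of_reduce_eq_self h2
  have happ : fsub (w ++ w) = fsub w ++ fsub w := fsub_append w w hsb
  constructor
  · -- cyclically reduced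
    have hΦuu : Φ u * Φ u = FreeGroup.mk (fsub (w ++ w)) := by
      rw [← map_mul, huu, mk_fsub Φ hΦa hΦb]
    have : (Φ u * Φ u).toWord = fsub (w ++ w) := by
      rw [hΦuu, FreeGroup.toWord_mk, reduce_eq_self_of_chain (fsub_chain _ hch2)]
    show FreeGroup.norm (Φ u * Φ u) = 2 * FreeGroup.norm (Φ u)
    have e1 : FreeGroup.norm (Φ u * Φ u) = (fsub (w ++ w)).length := by
      rw [FreeGroup.norm, this]
    have e2 : FreeGroup.norm (Φ u) = (fsub w).length := by
      rw [FreeGroup.norm, htoword]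
    rw [e1, e2, happ, List.length_append]
    ring
  · rcases hsb with h | h
    · left
      rcases hw2 : w with _ | ⟨x, t⟩
      · rw [hw2] at h; simp at h
      · rw [hw2] at h
        simp at h
        obtain ⟨z, t', hz, hzor, -⟩ := fsub_head x t
        rw [htoword, hw2, hz]
        subst h
        rcases hzor with rfl | ⟨h1, -⟩ | ⟨h1, -⟩ <;> simp_all
    · right
      rw [htoword]
      exact fsub_last w h

/-- If u is cyclically reduced and its reduced word starts with b or ends with
b⁻¹, then for every m ≥ 0 so does φ_{a,ba}ᵐ(u).  (In `toWord`, the letter b is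
`(true, true)` and b⁻¹ is `(true, false)`.) -/
theorem stmt_15 (u : F2) (hcyc : CyclicallyReduced u)
    (hsb : u.toWord.head? = some (true, true) ∨
           u.toWord.getLast? = some (true, false))
    (Φ : MulAut F2) (hΦa : Φ a = a) (hΦb : Φ b = b * a) (m : ℕ) :
    CyclicallyReduced ((Φ ^ m) u) ∧
    (((Φ ^ m) u).toWord.head? = some (true, true) ∨
     ((Φ ^ m) u).toWord.getLast? = some (true, false)) := by
  induction m generalizing u with
  | zero => simpa using ⟨hcyc, hsb⟩
  | succ n ih =>
    have h1 : (Φ ^ (n + 1)) u = (Φ ^ n) (Φ u) := by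
      rw [pow_succ, MulAut.mul_apply]
    rw [h1]
    obtain ⟨hc, hs⟩ := key_step Φ hΦa hΦb u hcyc hsb
    exact ih (Φ u) hc hs
end
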